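/- arXiv:1612.00355 — 3 statements merged into one kernel-verified Lean document; each statement's English description precedes it below -/
import Mathlib

section
/- Let I and M be sets and let Φ assign to each pair (α,β) ∈ I×I a binary relation Φ_{αβ} on M. Then Φ satisfies the Sincov inequalities Φ_{αβ}∘Φ_{βγ} ⊆ Φ_{αγ}, Φ_{αβ}⁻¹ ⊆ Φ_{βα}, and Φ_{αα} ⊆ id_M (for all α,β,γ ∈ I) if and only if there exist a set Z and a family {φ_α}_{α∈I} of binary relations φ_α ⊆ Z×M, each of which is both injective and co-injective, such that Φ_{αβ} = φ_α ∘ φ_β⁻¹ for every (α,β) ∈ I×I. -/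
universe u v

/-- Composition of binary relations: `(a,b) ∈ ρ ∘ σ ↔ ∃ c, (c,b) ∈ ρ ∧ (a,c) ∈ σ`
(σ applied first). -/
def RelComp {A C B : Type*} (ρ : Set (C × B)) (σ : Set (A × C)) : Set (A × B) :=
  {p | ∃ c, (c, p.2) ∈ ρ ∧ (p.1, c) ∈ σ}

/-- Inverse of a binary relation. -/
def RelInv {A B : Type*} (ρ : Set (A × B)) : Set (B × A) :=
  {p | (p.2, p.1) ∈ ρ}

/-- Domain of a binary relation. -/
def RelDom {A B : Type*} (ρ : Set (A × B)) : Set A := {a | ∃ b, (a, b) ∈ ρ}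

/-- Range of a binary relation. -/
def RelRng {A B : Type*} (ρ : Set (A × B)) : Set B := {b | ∃ a, (a, b) ∈ ρ}

/-- Identity relation on a subset `S`. -/
def IdOn {A : Type*} (S : Set A) : Set (A × A) := {p | p.1 ∈ S ∧ p.1 = p.2}

/-- Identity relation on the whole type `M`. -/
def IdRel (M : Type*) : Set (M × M) := {p | p.1 = p.2}

/-- A relation is injective if `(b₁,a) ∈ ρ` and `(b₂,a) ∈ ρ` imply `b₁ = b₂`. -/
def RelInjective {A B : Type*} (ρ : Set (A × B)) : Prop :=
  ∀ ⦃b₁ b₂ : A⦄ ⦃a : B⦄, (b₁, a) ∈ ρ → (b₂, a) ∈ ρ → b₁ = b₂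

/-- A relation is co-injective if its inverse is injective. -/
def RelCoinjective {A B : Type*} (ρ : Set (A × B)) : Prop :=
  RelInjective (RelInv ρ)

/-- general solution of Sincov's inequalities. -/
theorem sincov_inequality_general_solution {I : Type u} {M : Type v}
    (Φ : I → I → Set (M × M)) :
    ((∀ α β γ : I, RelComp (Φ α β) (Φ β γ) ⊆ Φ α γ) ∧
     (∀ α β : I, RelInv (Φ α β) ⊆ Φ β α) ∧
     (∀ α : I, Φ α α ⊆ IdRel M)) ↔
    ∃ (Z : Type (max u v)) (φ : I → Set (Z × M)),
      (∀ α, RelInjective (φ α) ∧ RelCoinjective (φ α)) ∧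
      (∀ α β, Φ α β = RelComp (φ α) (RelInv (φ β))) := by
  constructor
  · rintro ⟨hcomp, hinv, hid⟩
    have hinv' : ∀ α β x y, (x, y) ∈ Φ α β → (y, x) ∈ Φ β α := fun α β x y h =>
      hinv α β (show ((y, x) : M × M) ∈ RelInv (Φ α β) from h)
    have htrans : ∀ α β γ x y z, (x, y) ∈ Φ β γ → (y, z) ∈ Φ α β → (x, z) ∈ Φ α γ :=
      fun α β γ x y z h1 h2 => hcomp α β γ ⟨y, h2, h1⟩
    have hrequiv : Equivalence (fun p q : I × M => p = q ∨ (p.2, q.2) ∈ Φ q.1 p.1) := by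
      constructor
      · intro p; exact Or.inl rfl
      · rintro p q (rfl | h)
        · exact Or.inl rfl
        · exact Or.inr (hinv' _ _ _ _ h)
      · rintro p q z (rfl | h1) h2
        · exact h2
        · rcases h2 with rfl | h2
          · exact Or.inr h1
          · exact Or.inr (htrans _ _ _ _ _ _ h1 h2)
    let s : Setoid (I × M) := ⟨_, hrequiv⟩
    refine ⟨Quotient s,
      fun α => {p | (p.2, p.2) ∈ Φ α α ∧ p.1 = Quotient.mk s (α, p.2)}, ?_, ?_⟩
    · intro α
      constructor
      · rintro z1 z2 m ⟨_, h1⟩ ⟨_, h2⟩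
        exact h1.trans h2.symm
      · rintro m1 m2 z ⟨h1, e1⟩ ⟨h2, e2⟩
        have := Quotient.exact (s := s) (e1.symm.trans e2)
        rcases this with h | h
        · exact congrArg Prod.snd h
        · exact hid α h
    · intro α β
      ext ⟨x, y⟩
      constructor
      · intro h
        have hyx : (y, x) ∈ Φ β α := hinv' _ _ _ _ h
        have hyy : (y, y) ∈ Φ α α := htrans _ _ _ _ _ _ hyx h
        have hxx : (x, x) ∈ Φ β β := htrans _ _ _ _ _ _ h hyx
        refine ⟨Quotient.mk s (α, y), ⟨hyy, rfl⟩, ⟨hxx, ?_⟩⟩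
        exact Quotient.sound (Or.inr hyx : ((α, y) : I × M) = (β, x) ∨ _)
      · rintro ⟨c, ⟨hyy, e1⟩, ⟨hxx, e2⟩⟩
        have := Quotient.exact (s := s) (e1.symm.trans e2)
        rcases this with h | h
        · injection h with h1 h2
          subst h1
          have h2' : y = x := h2
          rw [h2']
          exact h2' ▸ hyy
        · exact hinv' _ _ _ _ h
  · rintro ⟨Z, φ, hφ, hΦ⟩
    refine ⟨?_, ?_, ?_⟩
    · rintro α β γ ⟨x, y⟩ ⟨c, hc1, hc2⟩
      rw [hΦ α β] at hc1
      rw [hΦ β γ] at hc2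
      rw [hΦ α γ]
      obtain ⟨z1, hz1, hz1'⟩ := hc1
      obtain ⟨z2, hz2, hz2'⟩ := hc2
      have : z1 = z2 := (hφ β).1 hz1' hz2
      exact ⟨z1, hz1, this ▸ hz2'⟩
    · rintro α β ⟨x, y⟩ h
      have : (y, x) ∈ Φ α β := h
      rw [hΦ α β] at this
      rw [hΦ β α]
      obtain ⟨z, hz1, hz2⟩ := this
      exact ⟨z, hz2, hz1⟩
    · rintro α ⟨x, y⟩ h
      rw [hΦ α α] at h
      obtain ⟨z, hz1, hz2⟩ := h
      exact (hφ α).2 hz2 hz1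
end

section
/- Let I, M, Z, Z̄ be sets and let {φ_α}_{α∈I} with φ_α ⊆ Z×M and {φ̄_α}_{α∈I} with φ̄_α ⊆ Z̄×M be two families of binary relations, each relation being both injective and co-injective, such that φ_α ∘ φ_β⁻¹ = φ̄_α ∘ φ̄_β⁻¹ for every (α,β) ∈ I×I. Then there exists a binary relation ω ⊆ Z×Z̄, both injective and co-injective, with domain ∪_{β∈I} dom φ_β and range ∪_{β∈I} dom φ̄_β, such that φ_α = φ̄_α ∘ ω for every α ∈ I. -/
universe u v

/-- uniqueness of the generating family up to an injective co-injection ω. -/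
theorem sincov_generating_family_unique {I Z Z' M : Type*}
    (φ : I → Set (Z × M)) (φ' : I → Set (Z' × M))
    (hφ : ∀ α, RelInjective (φ α) ∧ RelCoinjective (φ α))
    (hφ' : ∀ α, RelInjective (φ' α) ∧ RelCoinjective (φ' α))
    (h : ∀ α β, RelComp (φ α) (RelInv (φ β)) = RelComp (φ' α) (RelInv (φ' β))) :
    ∃ ω : Set (Z × Z'),
      RelInjective ω ∧ RelCoinjective ω ∧
      (RelDom ω = ⋃ β, RelDom (φ β)) ∧
      (RelRng ω = ⋃ β, RelDom (φ' β)) ∧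
      (∀ α, φ α = RelComp (φ' α) ω) := by
  refine ⟨{p | ∃ β m, (p.1, m) ∈ φ β ∧ (p.2, m) ∈ φ' β}, ?_, ?_, ?_, ?_, ?_⟩
  · -- injective
    rintro z₁ z₂ z' ⟨β₁, m₁, hz₁, hz'₁⟩ ⟨β₂, m₂, hz₂, hz'₂⟩
    have hmm : (m₂, m₁) ∈ RelComp (φ' β₁) (RelInv (φ' β₂)) := ⟨z', hz'₁, hz'₂⟩
    rw [← h β₁ β₂] at hmm
    obtain ⟨w, hw₁, hw₂⟩ := hmm
    have : w = z₂ := (hφ β₂).1 hw₂ hz₂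
    subst this
    exact (hφ β₁).1 hz₁ hw₁
  · -- coinjective
    rintro z'₁ z'₂ z ⟨β₁, m₁, hz₁, hz'₁⟩ ⟨β₂, m₂, hz₂, hz'₂⟩
    have hmm : (m₂, m₁) ∈ RelComp (φ β₁) (RelInv (φ β₂)) := ⟨z, hz₁, hz₂⟩
    rw [h β₁ β₂] at hmm
    obtain ⟨w, hw₁, hw₂⟩ := hmm
    have : w = z'₂ := (hφ' β₂).1 hw₂ hz'₂
    subst this
    exact (hφ' β₁).1 hz'₁ hw₁
  · -- domain
    ext z
    simp only [RelDom, Set.mem_setOf_eq, Set.mem_iUnion]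
    constructor
    · rintro ⟨z', β, m, hz, _⟩; exact ⟨β, m, hz⟩
    · rintro ⟨β, m, hz⟩
      have hmm : (m, m) ∈ RelComp (φ β) (RelInv (φ β)) := ⟨z, hz, hz⟩
      rw [h β β] at hmm
      obtain ⟨z', hz'₁, hz'₂⟩ := hmm
      exact ⟨z', β, m, hz, hz'₁⟩
  · -- range
    ext z'
    simp only [RelRng, RelDom, Set.mem_setOf_eq, Set.mem_iUnion]
    constructor
    · rintro ⟨z, β, m, _, hz'⟩; exact ⟨β, m, hz'⟩
    · rintro ⟨β, m, hz'⟩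
      have hmm : (m, m) ∈ RelComp (φ' β) (RelInv (φ' β)) := ⟨z', hz', hz'⟩
      rw [← h β β] at hmm
      obtain ⟨z, hz₁, hz₂⟩ := hmm
      exact ⟨z, β, m, hz₁, hz'⟩
  · -- φ α = φ' α ∘ ω
    intro α
    ext ⟨z, m⟩
    constructor
    · intro hz
      have hmm : (m, m) ∈ RelComp (φ α) (RelInv (φ α)) := ⟨z, hz, hz⟩
      rw [h α α] at hmm
      obtain ⟨z', hz'₁, hz'₂⟩ := hmm
      exact ⟨z', hz'₁, α, m, hz, hz'₁⟩
    · rintro ⟨z', hz'm, β, m₀, hzm₀, hz'm₀⟩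
      have hmm : (m₀, m) ∈ RelComp (φ' α) (RelInv (φ' β)) := ⟨z', hz'm, hz'm₀⟩
      rw [← h α β] at hmm
      obtain ⟨w, hw₁, hw₂⟩ := hmm
      have : w = z := (hφ β).1 hw₂ hzm₀
      subst this
      exact hw₁
end

section
/- Let I and M be sets and let Φ assign to each pair (α,β) ∈ I×I a binary relation Φ_{αβ} on M satisfying the Sincov inequalities Φ_{αβ}∘Φ_{βγ} ⊆ Φ_{αγ}, Φ_{αβ}⁻¹ ⊆ Φ_{βα}, and Φ_{αα} ⊆ id_M for all α,β,γ ∈ I. Then for every (α,β) ∈ I×I the relation Φ_{αβ} is both injective and co-injective. -/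
universe u v

/-- solutions of Sincov's inequalities consist of injective co-injections. -/
theorem sincov_solution_injective_coinjective {I M : Type*}
    (Φ : I → I → Set (M × M))
    (h1 : ∀ α β γ : I, RelComp (Φ α β) (Φ β γ) ⊆ Φ α γ)
    (h2 : ∀ α β : I, RelInv (Φ α β) ⊆ Φ β α)
    (h3 : ∀ α : I, Φ α α ⊆ IdRel M) :
    ∀ α β : I, RelInjective (Φ α β) ∧ RelCoinjective (Φ α β) := by
  intro α β
  constructor
  · intro b₁ b₂ a hb₁ hb₂
    have hinv : (a, b₂) ∈ Φ β α := h2 α β hb₂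
    have : (b₁, b₂) ∈ Φ β β := h1 β α β ⟨a, hinv, hb₁⟩
    exact h3 β this
  · intro b₁ b₂ a hb₁ hb₂
    have h₁' : (b₁, a) ∈ Φ β α := h2 α β hb₁
    have : (b₁, b₂) ∈ Φ α α := h1 α β α ⟨a, hb₂, h₁'⟩
    exact h3 α this
end
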